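/- arXiv:0711.1981 — 2 statements merged into one kernel-verified Lean document; each statement's English description precedes it below -/
import Mathlib

section
/- Let $M$ and $\Phi$ be symmetric real $n \times n$ matrices with $\Phi$ positive semidefinite of rank 1, and suppose $\operatorname{rank}(M + \Phi) = \operatorname{rank}(M) + 1$. Then $M + \Phi$ has the same number of negative eigenvalues as $M$, and exactly one more positive eigenvalue than $M$. -/
open Matrix Submodule Module Finset

variable {n : ℕ}

noncomputable abbrev quadF (A : Matrix (Fin n) (Fin n) ℝ) (x : EuclideanSpace ℝ (Fin n)) : ℝ :=
  inner ℝ x (Matrix.toEuclideanLin A x)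

lemma quad_eq_sum (A : Matrix (Fin n) (Fin n) ℝ) (hA : A.IsHermitian)
    (x : EuclideanSpace ℝ (Fin n)) :
    quadF A x = ∑ i, hA.eigenvalues i * (hA.eigenvectorBasis.repr x i) ^ 2 := by
  set b := hA.eigenvectorBasis with hb
  have hx : ∑ i, b.repr x i • b i = x := b.sum_repr x
  have hT : ∀ i, Matrix.toEuclideanLin A (b i) = hA.eigenvalues i • b i := by
    intro i
    apply (WithLp.equiv 2 _).injective
    simpa [Matrix.toEuclideanLin_apply] using hA.mulVec_eigenvectorBasis i
  have hTx : Matrix.toEuclideanLin A x = ∑ i, (hA.eigenvalues i * b.repr x i) • b i := by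
    conv_lhs => rw [← hx]
    rw [map_sum]
    refine Finset.sum_congr rfl fun i _ => ?_
    rw [LinearMap.map_smul, hT, smul_smul, mul_comm]
  rw [quadF, hTx, inner_sum]
  refine Finset.sum_congr rfl fun i _ => ?_
  rw [real_inner_smul_right]
  have : inner ℝ x (b i) = b.repr x i := by
    rw [real_inner_comm, b.repr_apply_apply]
  rw [this]; ring

lemma repr_eq_zero_of_mem_span {A : Matrix (Fin n) (Fin n) ℝ} (hA : A.IsHermitian)
    {s : Set (Fin n)} {x : EuclideanSpace ℝ (Fin n)}
    (hx : x ∈ Submodule.span ℝ (hA.eigenvectorBasis '' s)) {i : Fin n} (hi : i ∉ s) :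
    hA.eigenvectorBasis.repr x i = 0 := by
  set b := hA.eigenvectorBasis
  induction hx using Submodule.span_induction with
  | mem y hy =>
    obtain ⟨j, hj, rfl⟩ := hy
    have hij : i ≠ j := fun h => hi (h ▸ hj)
    have : b.repr (b j) = EuclideanSpace.single j 1 := b.repr_self j
    rw [this, EuclideanSpace.single_apply]
    simp [hij]
  | zero => simp
  | add y z _ _ hy hz => rw [map_add]; simp [hy, hz]
  | smul c y _ hy => rw [_root_.map_smul]; simp [hy]

/-- span of eigenvectors with eigenvalue satisfying `p` has the right dimension. -/
lemma finrank_span_eigenvectors {A : Matrix (Fin n) (Fin n) ℝ} (hA : A.IsHermitian)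
    (p : Fin n → Prop) [DecidablePred p] :
    finrank ℝ (Submodule.span ℝ (hA.eigenvectorBasis '' {i | p i})) =
      Fintype.card {i // p i} := by
  set b := hA.eigenvectorBasis
  have hon : Orthonormal ℝ (fun i : {i // p i} => b i.1) :=
    b.orthonormal.comp _ Subtype.val_injective
  have hli := hon.linearIndependent
  have : b '' {i | p i} = Set.range (fun i : {i // p i} => b i.1) := by
    ext y; simp [Set.mem_image, Set.mem_range, Subtype.exists]
  rw [this, finrank_span_eq_card hli]

lemma finrank_le_card_neg {A : Matrix (Fin n) (Fin n) ℝ} (hA : A.IsHermitian)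
    (V : Submodule ℝ (EuclideanSpace ℝ (Fin n)))
    (hV : ∀ x ∈ V, x ≠ 0 → quadF A x < 0) :
    finrank ℝ V ≤ Fintype.card {i // hA.eigenvalues i < 0} := by
  classical
  set b := hA.eigenvectorBasis
  set W := Submodule.span ℝ (b '' {i | ¬ hA.eigenvalues i < 0})
  have hdis : Disjoint V W := by
    rw [Submodule.disjoint_def]
    intro x hxV hxW
    by_contra hx0
    have hlt := hV x hxV hx0
    have hge : 0 ≤ quadF A x := by
      rw [quad_eq_sum A hA]
      refine Finset.sum_nonneg fun i _ => ?_
      by_cases hi : hA.eigenvalues i < 0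
      · have : b.repr x i = 0 := repr_eq_zero_of_mem_span hA hxW (by simpa using hi)
        rw [show hA.eigenvectorBasis.repr x i = 0 from this]; simp
      · exact mul_nonneg (not_lt.1 hi) (sq_nonneg _)
    linarith
  have hsum := Submodule.finrank_add_finrank_le_of_disjoint hdis
  have hW : finrank ℝ W = Fintype.card {i // ¬ hA.eigenvalues i < 0} :=
    finrank_span_eigenvectors hA _
  have hE : finrank ℝ (EuclideanSpace ℝ (Fin n)) = n := finrank_euclideanSpace_fin
  have hc : Fintype.card {i // ¬ hA.eigenvalues i < 0} =
      n - Fintype.card {i // hA.eigenvalues i < 0} := by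
    rw [Fintype.card_subtype_compl]; simp
  have hle : Fintype.card {i // hA.eigenvalues i < 0} ≤ n := by
    simpa using Fintype.card_subtype_le (fun i => hA.eigenvalues i < 0)
  omega

lemma finrank_le_card_pos {A : Matrix (Fin n) (Fin n) ℝ} (hA : A.IsHermitian)
    (V : Submodule ℝ (EuclideanSpace ℝ (Fin n)))
    (hV : ∀ x ∈ V, x ≠ 0 → 0 < quadF A x) :
    finrank ℝ V ≤ Fintype.card {i // 0 < hA.eigenvalues i} := by
  classical
  set b := hA.eigenvectorBasis
  set W := Submodule.span ℝ (b '' {i | ¬ 0 < hA.eigenvalues i})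
  have hdis : Disjoint V W := by
    rw [Submodule.disjoint_def]
    intro x hxV hxW
    by_contra hx0
    have hlt := hV x hxV hx0
    have hge : quadF A x ≤ 0 := by
      rw [quad_eq_sum A hA]
      refine Finset.sum_nonpos fun i _ => ?_
      by_cases hi : 0 < hA.eigenvalues i
      · have : b.repr x i = 0 := repr_eq_zero_of_mem_span hA hxW (by simpa using hi)
        rw [show hA.eigenvectorBasis.repr x i = 0 from this]; simp
      · exact mul_nonpos_of_nonpos_of_nonneg (not_lt.1 hi) (sq_nonneg _)
    linarith
  have hsum := Submodule.finrank_add_finrank_le_of_disjoint hdis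
  have hW : finrank ℝ W = Fintype.card {i // ¬ 0 < hA.eigenvalues i} :=
    finrank_span_eigenvectors hA _
  have hE : finrank ℝ (EuclideanSpace ℝ (Fin n)) = n := finrank_euclideanSpace_fin
  have hc : Fintype.card {i // ¬ 0 < hA.eigenvalues i} =
      n - Fintype.card {i // 0 < hA.eigenvalues i} := by
    rw [Fintype.card_subtype_compl]; simp
  have hle : Fintype.card {i // 0 < hA.eigenvalues i} ≤ n := by
    simpa using Fintype.card_subtype_le (fun i => 0 < hA.eigenvalues i)
  omega

lemma span_neg_definite {A : Matrix (Fin n) (Fin n) ℝ} (hA : A.IsHermitian) :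
    ∃ V : Submodule ℝ (EuclideanSpace ℝ (Fin n)),
      finrank ℝ V = Fintype.card {i // hA.eigenvalues i < 0} ∧
      ∀ x ∈ V, x ≠ 0 → quadF A x < 0 := by
  classical
  set b := hA.eigenvectorBasis
  refine ⟨Submodule.span ℝ (b '' {i | hA.eigenvalues i < 0}),
    finrank_span_eigenvectors hA _, fun x hx hx0 => ?_⟩
  rw [quad_eq_sum A hA]
  have hsupp : ∀ i, ¬ hA.eigenvalues i < 0 → b.repr x i = 0 := fun i hi =>
    repr_eq_zero_of_mem_span hA hx (by simpa using hi)
  have hrepr : b.repr x ≠ 0 := fun h => hx0 (by simpa using congrArg b.repr.symm h)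
  obtain ⟨j, hj⟩ : ∃ j, b.repr x j ≠ 0 := by
    by_contra h; push_neg at h; exact hrepr (by ext i; simpa using h i)
  have hj' : hA.eigenvalues j < 0 := by
    by_contra h; exact hj (hsupp j h)
  calc ∑ i, hA.eigenvalues i * (b.repr x i) ^ 2 < ∑ _i : Fin n, (0 : ℝ) := by
        refine Finset.sum_lt_sum (fun i _ => ?_) ⟨j, Finset.mem_univ j, ?_⟩
        · by_cases hi : hA.eigenvalues i < 0
          · exact mul_nonpos_of_nonpos_of_nonneg hi.le (sq_nonneg _)
          · simp [hsupp i hi]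
        · exact mul_neg_of_neg_of_pos hj' (by positivity)
    _ = 0 := by simp

lemma span_pos_definite {A : Matrix (Fin n) (Fin n) ℝ} (hA : A.IsHermitian) :
    ∃ V : Submodule ℝ (EuclideanSpace ℝ (Fin n)),
      finrank ℝ V = Fintype.card {i // 0 < hA.eigenvalues i} ∧
      ∀ x ∈ V, x ≠ 0 → 0 < quadF A x := by
  classical
  set b := hA.eigenvectorBasis
  refine ⟨Submodule.span ℝ (b '' {i | 0 < hA.eigenvalues i}),
    finrank_span_eigenvectors hA _, fun x hx hx0 => ?_⟩
  rw [quad_eq_sum A hA]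
  have hsupp : ∀ i, ¬ 0 < hA.eigenvalues i → b.repr x i = 0 := fun i hi =>
    repr_eq_zero_of_mem_span hA hx (by simpa using hi)
  have hrepr : b.repr x ≠ 0 := fun h => hx0 (by simpa using congrArg b.repr.symm h)
  obtain ⟨j, hj⟩ : ∃ j, b.repr x j ≠ 0 := by
    by_contra h; push_neg at h; exact hrepr (by ext i; simpa using h i)
  have hj' : 0 < hA.eigenvalues j := by
    by_contra h; exact hj (hsupp j h)
  calc (0:ℝ) = ∑ _i : Fin n, (0 : ℝ) := by simp
    _ < ∑ i, hA.eigenvalues i * (b.repr x i) ^ 2 := by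
        refine Finset.sum_lt_sum (fun i _ => ?_) ⟨j, Finset.mem_univ j, ?_⟩
        · by_cases hi : 0 < hA.eigenvalues i
          · exact mul_nonneg hi.le (sq_nonneg _)
          · simp [hsupp i hi]
        · exact mul_pos hj' (by positivity)

lemma card_neg_add_card_pos {A : Matrix (Fin n) (Fin n) ℝ} (hA : A.IsHermitian) :
    A.rank = Fintype.card {i // hA.eigenvalues i < 0} +
      Fintype.card {i // 0 < hA.eigenvalues i} := by
  classical
  rw [hA.rank_eq_card_non_zero_eigs]
  have h1 : Fintype.card {i // hA.eigenvalues i ≠ 0} =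
      Fintype.card {i // hA.eigenvalues i < 0 ∨ 0 < hA.eigenvalues i} :=
    Fintype.card_congr (Equiv.subtypeEquivRight fun i => ne_iff_lt_or_gt)
  rw [h1, Fintype.card_subtype_or_disjoint]
  intro p hp1 hp2 i hi
  exact absurd ((hp1 i hi).trans (hp2 i hi)) (lt_irrefl _)

/-- Adding a rank-one positive semidefinite matrix `Φ` to a symmetric matrix `M`
with `rank (M + Φ) = rank M + 1` keeps the number of negative eigenvalues and
increases the number of positive eigenvalues by one. -/
theorem rank_one_psd_perturbation {n : ℕ}
    (M Φ : Matrix (Fin n) (Fin n) ℝ)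
    (hM : M.IsHermitian) (hΦ : Φ.PosSemidef) (hrkΦ : Φ.rank = 1)
    (hrk : (M + Φ).rank = M.rank + 1) :
    Nat.card {i // (hM.add hΦ.1).eigenvalues i < 0} =
      Nat.card {i // hM.eigenvalues i < 0} ∧
    Nat.card {i // 0 < (hM.add hΦ.1).eigenvalues i} =
      Nat.card {i // 0 < hM.eigenvalues i} + 1 := by
  classical
  have hMΦ : (M + Φ).IsHermitian := hM.add hΦ.1
  have hquad : ∀ x, quadF (M + Φ) x = quadF M x + quadF Φ x := by
    intro x
    simp only [quadF, map_add, LinearMap.add_apply, inner_add_right]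
  have hΦnonneg : ∀ x, 0 ≤ quadF Φ x := by
    intro x
    rw [quad_eq_sum Φ hΦ.1]
    exact Finset.sum_nonneg fun i _ => mul_nonneg (hΦ.eigenvalues_nonneg i) (sq_nonneg _)
  -- first inequality: N' ≤ N
  have h1 : Fintype.card {i // hMΦ.eigenvalues i < 0} ≤
      Fintype.card {i // hM.eigenvalues i < 0} := by
    obtain ⟨V, hV1, hV2⟩ := span_neg_definite hMΦ
    rw [← hV1]
    refine finrank_le_card_neg hM V fun x hx hx0 => ?_
    have := hV2 x hx hx0; have := hΦnonneg x; have := hquad x; linarith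
  -- kernel-like subspace of Φ
  have hcardΦ : Fintype.card {i // 0 < hΦ.1.eigenvalues i} = 1 := by
    have hiff : ∀ i, 0 < hΦ.1.eigenvalues i ↔ hΦ.1.eigenvalues i ≠ 0 := fun i =>
      ⟨fun h => ne_of_gt h, fun h => lt_of_le_of_ne (hΦ.eigenvalues_nonneg i) (Ne.symm h)⟩
    rw [Fintype.card_congr (Equiv.subtypeEquivRight hiff),
      ← hΦ.1.rank_eq_card_non_zero_eigs, hrkΦ]
  set W := Submodule.span ℝ (hΦ.1.eigenvectorBasis '' {i | ¬ 0 < hΦ.1.eigenvalues i}) with hWdef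
  have hWrank : finrank ℝ W = n - 1 := by
    rw [hWdef, finrank_span_eigenvectors hΦ.1, Fintype.card_subtype_compl, hcardΦ,
      Fintype.card_fin]
  have hWzero : ∀ x ∈ W, quadF Φ x = 0 := by
    intro x hx
    rw [quad_eq_sum Φ hΦ.1]
    refine Finset.sum_eq_zero fun i _ => ?_
    by_cases hi : 0 < hΦ.1.eigenvalues i
    · rw [repr_eq_zero_of_mem_span hΦ.1 hx (by simpa using hi)]; ring
    · rw [le_antisymm (not_lt.1 hi) (hΦ.eigenvalues_nonneg i)]; ring
  -- second inequality: P' ≤ P + 1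
  have h2 : Fintype.card {i // 0 < hMΦ.eigenvalues i} ≤
      Fintype.card {i // 0 < hM.eigenvalues i} + 1 := by
    obtain ⟨V, hV1, hV2⟩ := span_pos_definite hMΦ
    have hVW : finrank ℝ (V ⊓ W : Submodule ℝ _) ≤
        Fintype.card {i // 0 < hM.eigenvalues i} := by
      refine finrank_le_card_pos hM (V ⊓ W) fun x hx hx0 => ?_
      have h3 := hV2 x hx.1 hx0
      have h4 := hWzero x hx.2
      have := hquad x; linarith
    have heq := Submodule.finrank_sup_add_finrank_inf_eq V W
    rw [hV1, hWrank] at heq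
    have hsup : finrank ℝ (V ⊔ W : Submodule ℝ _) ≤ n := by
      have := Submodule.finrank_le (V ⊔ W)
      rwa [finrank_euclideanSpace_fin] at this
    have hP'n : Fintype.card {i // 0 < hMΦ.eigenvalues i} ≤ n := by
      simpa using Fintype.card_subtype_le (fun i => 0 < hMΦ.eigenvalues i)
    omega
  -- counting via rank
  have hcM := card_neg_add_card_pos hM
  have hcMΦ := card_neg_add_card_pos hMΦ
  rw [hcM, hcMΦ] at hrk
  constructor <;> simp only [Nat.card_eq_fintype_card] <;> omega
end

section
/- Let $M$ and $\Phi$ be symmetric real $n \times n$ matrices with $\Phi$ negative semidefinite of rank 1, and suppose $\operatorname{rank}(M + \Phi) = \operatorname{rank}(M) + 1$. Then $M + \Phi$ has the same number of positive eigenvalues as $M$ and exactly one more negative eigenvalue than $M$. -/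
open Matrix Finset Module

variable {n : ℕ} {A : Matrix (Fin n) (Fin n) ℝ}

lemma quad_eq (hA : A.IsHermitian) (y : Fin n → ℝ) :
    ((hA.eigenvectorUnitary : Matrix (Fin n) (Fin n) ℝ) *ᵥ y) ⬝ᵥ
      (A *ᵥ ((hA.eigenvectorUnitary : Matrix (Fin n) (Fin n) ℝ) *ᵥ y))
      = ∑ i, hA.eigenvalues i * (y i) ^ 2 := by
  set U : Matrix (Fin n) (Fin n) ℝ := (hA.eigenvectorUnitary : Matrix (Fin n) (Fin n) ℝ) with hU
  have hsU : star U * U = 1 := Matrix.UnitaryGroup.star_mul_self hA.eigenvectorUnitary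
  conv_lhs => rw [hA.spectral_theorem, Unitary.conjStarAlgAut_apply, mulVec_mulVec, mul_assoc, hsU, mul_one, dotProduct_mulVec,
    ← mulVec_transpose, transpose_mul, mulVec_mulVec]
  rw [← hU, diagonal_transpose, mul_assoc, show Uᵀ = star U from rfl, hsU, mul_one]
  simp [dotProduct, mulVec_diagonal, pow_two]
  exact Finset.sum_congr rfl fun i _ => by ring

lemma mulstar (hA : A.IsHermitian) (x : Fin n → ℝ) :
    (hA.eigenvectorUnitary : Matrix (Fin n) (Fin n) ℝ) *ᵥ
      ((star (hA.eigenvectorUnitary : Matrix (Fin n) (Fin n) ℝ)) *ᵥ x) = x := by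
  rw [mulVec_mulVec, Matrix.mem_unitaryGroup_iff.mp hA.eigenvectorUnitary.2, one_mulVec]

lemma quad_eq' (hA : A.IsHermitian) (x : Fin n → ℝ) :
    x ⬝ᵥ (A *ᵥ x)
      = ∑ i, hA.eigenvalues i *
        (((star (hA.eigenvectorUnitary : Matrix (Fin n) (Fin n) ℝ)) *ᵥ x) i) ^ 2 := by
  conv_lhs => rw [← mulstar hA x]
  exact quad_eq hA _

/-- L1: a subspace on which the form is negative definite has dim ≤ #negative eigenvalues. -/
lemma count_ge_of_negdef (hA : A.IsHermitian) (W : Submodule ℝ (Fin n → ℝ))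
    (hW : ∀ x ∈ W, x ≠ 0 → x ⬝ᵥ (A *ᵥ x) < 0) :
    finrank ℝ W ≤ Fintype.card {i // hA.eigenvalues i < 0} := by
  classical
  set U : Matrix (Fin n) (Fin n) ℝ := (hA.eigenvectorUnitary : Matrix (Fin n) (Fin n) ℝ)
  let T : (Fin n → ℝ) →ₗ[ℝ] ({i // hA.eigenvalues i < 0} → ℝ) :=
    (LinearMap.funLeft ℝ ℝ Subtype.val).comp (Matrix.mulVecLin (star U))
  have hinj : Function.Injective (T.comp W.subtype) := by
    rw [← LinearMap.ker_eq_bot, LinearMap.ker_eq_bot']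
    intro x hx
    have hx' : ∀ i : Fin n, hA.eigenvalues i < 0 → (star U *ᵥ (x : Fin n → ℝ)) i = 0 := by
      intro i hi
      exact congrFun hx ⟨i, hi⟩
    have hq : 0 ≤ (x : Fin n → ℝ) ⬝ᵥ (A *ᵥ (x : Fin n → ℝ)) := by
      rw [quad_eq' hA]
      refine Finset.sum_nonneg fun i _ => ?_
      by_cases hi : hA.eigenvalues i < 0
      · simp [show (star (hA.eigenvectorUnitary : Matrix (Fin n) (Fin n) ℝ) *ᵥ (x : Fin n → ℝ)) i = 0 from hx' i hi]
      · push_neg at hi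
        positivity
    by_contra hne
    have hxne : (x : Fin n → ℝ) ≠ 0 := fun h => hne (Subtype.ext h)
    exact absurd (hW x x.2 hxne) (not_lt.2 hq)
  calc finrank ℝ W ≤ finrank ℝ ({i // hA.eigenvalues i < 0} → ℝ) :=
        LinearMap.finrank_le_finrank_of_injective hinj
    _ = Fintype.card {i // hA.eigenvalues i < 0} := by
        rw [Module.finrank_fintype_fun_eq_card]

/-- L2: there is a subspace of dim ≥ #negative eigenvalues on which the form is neg. def. -/
lemma exists_negdef_space (hA : A.IsHermitian) :
    ∃ W : Submodule ℝ (Fin n → ℝ),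
      Fintype.card {i // hA.eigenvalues i < 0} ≤ finrank ℝ W ∧
      ∀ x ∈ W, x ≠ 0 → x ⬝ᵥ (A *ᵥ x) < 0 := by
  classical
  set U : Matrix (Fin n) (Fin n) ℝ := (hA.eigenvectorUnitary : Matrix (Fin n) (Fin n) ℝ)
  let S : (Fin n → ℝ) →ₗ[ℝ] ({i // 0 ≤ hA.eigenvalues i} → ℝ) :=
    (LinearMap.funLeft ℝ ℝ Subtype.val).comp (Matrix.mulVecLin (star U))
  refine ⟨LinearMap.ker S, ?_, ?_⟩
  · have h1 : finrank ℝ (LinearMap.range S) + finrank ℝ (LinearMap.ker S)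
        = finrank ℝ (Fin n → ℝ) := LinearMap.finrank_range_add_finrank_ker S
    have h2 : finrank ℝ (LinearMap.range S) ≤ Fintype.card {i // 0 ≤ hA.eigenvalues i} := by
      calc finrank ℝ (LinearMap.range S) ≤ finrank ℝ ({i // 0 ≤ hA.eigenvalues i} → ℝ) :=
            Submodule.finrank_le _
        _ = _ := by rw [Module.finrank_fintype_fun_eq_card]
    have h3 : Fintype.card {i // hA.eigenvalues i < 0}
        + Fintype.card {i // 0 ≤ hA.eigenvalues i} = n := by
      have hc := Fintype.card_subtype_compl (fun i => hA.eigenvalues i < 0)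
      rw [Fintype.card_fin] at hc
      have hle : Fintype.card {i // hA.eigenvalues i < 0} ≤ n := by
        simpa using Fintype.card_subtype_le (fun i => hA.eigenvalues i < 0)
      have he : Fintype.card {i // ¬ hA.eigenvalues i < 0}
          = Fintype.card {i // 0 ≤ hA.eigenvalues i} :=
        Fintype.card_congr (Equiv.subtypeEquivRight fun i => not_lt)
      omega
    have h4 : finrank ℝ (Fin n → ℝ) = n := by
      rw [Module.finrank_fintype_fun_eq_card, Fintype.card_fin]
    omega
  · intro x hx hxne
    have hy : ∀ i : Fin n, 0 ≤ hA.eigenvalues i → (star U *ᵥ x) i = 0 := by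
      intro i hi
      exact congrFun (LinearMap.mem_ker.1 hx) ⟨i, hi⟩
    have hyne : star U *ᵥ x ≠ 0 := by
      intro h
      apply hxne
      rw [← mulstar hA x, h, mulVec_zero]
    obtain ⟨j, hj0⟩ := Function.ne_iff.1 hyne
    have hj : (star U *ᵥ x) j ≠ 0 := by simpa using hj0
    have hlj : hA.eigenvalues j < 0 := by
      by_contra h
      exact hj (hy j (not_lt.1 h))
    rw [quad_eq' hA]
    have : ∑ i, hA.eigenvalues i * ((star U *ᵥ x) i) ^ 2 < ∑ _i : Fin n, (0:ℝ) := by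
      refine Finset.sum_lt_sum (fun i _ => ?_) ⟨j, Finset.mem_univ j, ?_⟩
      · by_cases hi : 0 ≤ hA.eigenvalues i
        · simp [hy i hi]
        · push_neg at hi
          exact mul_nonpos_of_nonpos_of_nonneg hi.le (sq_nonneg _)
      · have : (0:ℝ) < ((star U *ᵥ x) j) ^ 2 := by positivity
        exact mul_neg_of_neg_of_pos hlj this
    simpa using this

/-- positive versions, via negation -/
lemma count_ge_of_posdef (hA : A.IsHermitian) (W : Submodule ℝ (Fin n → ℝ))
    (hW : ∀ x ∈ W, x ≠ 0 → 0 < x ⬝ᵥ (A *ᵥ x)) :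
    finrank ℝ W ≤ Fintype.card {i // 0 < hA.eigenvalues i} := by
  classical
  set U : Matrix (Fin n) (Fin n) ℝ := (hA.eigenvectorUnitary : Matrix (Fin n) (Fin n) ℝ)
  let T : (Fin n → ℝ) →ₗ[ℝ] ({i // 0 < hA.eigenvalues i} → ℝ) :=
    (LinearMap.funLeft ℝ ℝ Subtype.val).comp (Matrix.mulVecLin (star U))
  have hinj : Function.Injective (T.comp W.subtype) := by
    rw [← LinearMap.ker_eq_bot, LinearMap.ker_eq_bot']
    intro x hx
    have hx' : ∀ i : Fin n, 0 < hA.eigenvalues i → (star U *ᵥ (x : Fin n → ℝ)) i = 0 := by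
      intro i hi
      exact congrFun hx ⟨i, hi⟩
    have hq : (x : Fin n → ℝ) ⬝ᵥ (A *ᵥ (x : Fin n → ℝ)) ≤ 0 := by
      rw [quad_eq' hA]
      refine Finset.sum_nonpos fun i _ => ?_
      by_cases hi : 0 < hA.eigenvalues i
      · simp [show (star (hA.eigenvectorUnitary : Matrix (Fin n) (Fin n) ℝ) *ᵥ (x : Fin n → ℝ)) i = 0 from hx' i hi]
      · push_neg at hi
        exact mul_nonpos_of_nonpos_of_nonneg hi (sq_nonneg _)
    by_contra hne
    have hxne : (x : Fin n → ℝ) ≠ 0 := fun h => hne (Subtype.ext h)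
    exact absurd (hW x x.2 hxne) (not_lt.2 hq)
  calc finrank ℝ W ≤ finrank ℝ ({i // 0 < hA.eigenvalues i} → ℝ) :=
        LinearMap.finrank_le_finrank_of_injective hinj
    _ = Fintype.card {i // 0 < hA.eigenvalues i} := by
        rw [Module.finrank_fintype_fun_eq_card]

lemma exists_posdef_space (hA : A.IsHermitian) :
    ∃ W : Submodule ℝ (Fin n → ℝ),
      Fintype.card {i // 0 < hA.eigenvalues i} ≤ finrank ℝ W ∧
      ∀ x ∈ W, x ≠ 0 → 0 < x ⬝ᵥ (A *ᵥ x) := by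
  classical
  set U : Matrix (Fin n) (Fin n) ℝ := (hA.eigenvectorUnitary : Matrix (Fin n) (Fin n) ℝ)
  let S : (Fin n → ℝ) →ₗ[ℝ] ({i // hA.eigenvalues i ≤ 0} → ℝ) :=
    (LinearMap.funLeft ℝ ℝ Subtype.val).comp (Matrix.mulVecLin (star U))
  refine ⟨LinearMap.ker S, ?_, ?_⟩
  · have h1 : finrank ℝ (LinearMap.range S) + finrank ℝ (LinearMap.ker S)
        = finrank ℝ (Fin n → ℝ) := LinearMap.finrank_range_add_finrank_ker S
    have h2 : finrank ℝ (LinearMap.range S) ≤ Fintype.card {i // hA.eigenvalues i ≤ 0} := by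
      calc finrank ℝ (LinearMap.range S) ≤ finrank ℝ ({i // hA.eigenvalues i ≤ 0} → ℝ) :=
            Submodule.finrank_le _
        _ = _ := by rw [Module.finrank_fintype_fun_eq_card]
    have h3 : Fintype.card {i // 0 < hA.eigenvalues i}
        + Fintype.card {i // hA.eigenvalues i ≤ 0} = n := by
      have hc := Fintype.card_subtype_compl (fun i => 0 < hA.eigenvalues i)
      rw [Fintype.card_fin] at hc
      have hle : Fintype.card {i // 0 < hA.eigenvalues i} ≤ n := by
        simpa using Fintype.card_subtype_le (fun i => 0 < hA.eigenvalues i)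
      have he : Fintype.card {i // ¬ 0 < hA.eigenvalues i}
          = Fintype.card {i // hA.eigenvalues i ≤ 0} :=
        Fintype.card_congr (Equiv.subtypeEquivRight fun i => not_lt)
      omega
    have h4 : finrank ℝ (Fin n → ℝ) = n := by
      rw [Module.finrank_fintype_fun_eq_card, Fintype.card_fin]
    omega
  · intro x hx hxne
    have hy : ∀ i : Fin n, hA.eigenvalues i ≤ 0 → (star U *ᵥ x) i = 0 := by
      intro i hi
      exact congrFun (LinearMap.mem_ker.1 hx) ⟨i, hi⟩
    have hyne : star U *ᵥ x ≠ 0 := by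
      intro h
      apply hxne
      rw [← mulstar hA x, h, mulVec_zero]
    obtain ⟨j, hj0⟩ := Function.ne_iff.1 hyne
    have hj : (star U *ᵥ x) j ≠ 0 := by simpa using hj0
    have hlj : 0 < hA.eigenvalues j := by
      by_contra h
      exact hj (hy j (not_lt.1 h))
    rw [quad_eq' hA]
    have : ∑ _i : Fin n, (0:ℝ) < ∑ i, hA.eigenvalues i * ((star U *ᵥ x) i) ^ 2 := by
      refine Finset.sum_lt_sum (fun i _ => ?_) ⟨j, Finset.mem_univ j, ?_⟩
      · by_cases hi : hA.eigenvalues i ≤ 0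
        · simp [hy i hi]
        · push_neg at hi
          positivity
      · have : (0:ℝ) < ((star U *ᵥ x) j) ^ 2 := by positivity
        exact mul_pos hlj this
    simpa using this

lemma card_split (f : Fin n → ℝ) :
    Fintype.card {i // f i ≠ 0}
      = Fintype.card {i // 0 < f i} + Fintype.card {i // f i < 0} := by
  classical
  have hd : Disjoint (fun i => 0 < f i) (fun i : Fin n => f i < 0) := by
    refine disjoint_iff.mpr ?_
    ext i
    simp only [Pi.inf_apply, Pi.bot_apply, inf_Prop_eq]
    exact iff_of_false (fun h => lt_asymm h.1 h.2) (by simp)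
  rw [← Fintype.card_subtype_or_disjoint _ _ hd]
  exact Fintype.card_congr (Equiv.subtypeEquivRight fun i => by
    constructor
    · intro h
      exact (ne_iff_lt_or_gt.1 h).symm
    · rintro (h | h)
      · exact h.ne'
      · exact h.ne)

theorem aux_main {n : ℕ} (M Φ : Matrix (Fin n) (Fin n) ℝ)
    (hM : M.IsHermitian) (hΦ : (-Φ).PosSemidef) (hrkΦ : Φ.rank = 1)
    (hrk : (M + Φ).rank = M.rank + 1) (hB : (M + Φ).IsHermitian) :
    Fintype.card {i // 0 < hB.eigenvalues i} = Fintype.card {i // 0 < hM.eigenvalues i} ∧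
    Fintype.card {i // hB.eigenvalues i < 0}
      = Fintype.card {i // hM.eigenvalues i < 0} + 1 := by
  classical
  have hΦle : ∀ x : Fin n → ℝ, x ⬝ᵥ (Φ *ᵥ x) ≤ 0 := by
    intro x
    have h0 : (0:ℝ) ≤ star x ⬝ᵥ ((-Φ) *ᵥ x) := hΦ.dotProduct_mulVec_nonneg x
    rw [neg_mulVec, dotProduct_neg, show star x = x from rfl] at h0
    linarith
  have hQB : ∀ x : Fin n → ℝ, x ⬝ᵥ ((M + Φ) *ᵥ x) = x ⬝ᵥ (M *ᵥ x) + x ⬝ᵥ (Φ *ᵥ x) := by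
    intro x
    rw [add_mulVec, dotProduct_add]
  -- q ≤ q'
  have ineq1 : Fintype.card {i // hM.eigenvalues i < 0}
      ≤ Fintype.card {i // hB.eigenvalues i < 0} := by
    obtain ⟨W, hWc, hWneg⟩ := exists_negdef_space hM
    refine hWc.trans (count_ge_of_negdef hB W fun x hx hne => ?_)
    have h1 := hWneg x hx hne
    have h2 := hΦle x
    rw [hQB x]
    linarith
  -- p' ≤ p
  have ineq2 : Fintype.card {i // 0 < hB.eigenvalues i}
      ≤ Fintype.card {i // 0 < hM.eigenvalues i} := by
    obtain ⟨W, hWc, hWpos⟩ := exists_posdef_space hB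
    refine hWc.trans (count_ge_of_posdef hM W fun x hx hne => ?_)
    have h1 := hWpos x hx hne
    have h2 := hΦle x
    rw [hQB x] at h1
    linarith
  -- q' ≤ q + 1
  have ineq3 : Fintype.card {i // hB.eigenvalues i < 0}
      ≤ Fintype.card {i // hM.eigenvalues i < 0} + 1 := by
    obtain ⟨W', hW'c, hW'neg⟩ := exists_negdef_space hB
    set K := LinearMap.ker Φ.mulVecLin with hKdef
    have hK : Φ.rank + finrank ℝ K = n := by
      have h := LinearMap.finrank_range_add_finrank_ker Φ.mulVecLin
      rw [Module.finrank_fintype_fun_eq_card, Fintype.card_fin] at h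
      exact h
    have hsupinf := Submodule.finrank_sup_add_finrank_inf_eq W' K
    have hsup : finrank ℝ ↥(W' ⊔ K) ≤ n := by
      have h := Submodule.finrank_le (W' ⊔ K)
      rwa [Module.finrank_fintype_fun_eq_card, Fintype.card_fin] at h
    have hMneg : ∀ x ∈ W' ⊓ K, x ≠ 0 → x ⬝ᵥ (M *ᵥ x) < 0 := by
      intro x hx hne
      obtain ⟨hx1, hx2⟩ := Submodule.mem_inf.1 hx
      have h1 := hW'neg x hx1 hne
      have h2 : Φ *ᵥ x = 0 := LinearMap.mem_ker.1 hx2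
      rw [hQB x, h2, dotProduct_zero, add_zero] at h1
      exact h1
    have hcount := count_ge_of_negdef hM (W' ⊓ K) hMneg
    omega
  have hrM : M.rank = Fintype.card {i // 0 < hM.eigenvalues i}
      + Fintype.card {i // hM.eigenvalues i < 0} := by
    rw [hM.rank_eq_card_non_zero_eigs, card_split]
  have hrB : (M + Φ).rank = Fintype.card {i // 0 < hB.eigenvalues i}
      + Fintype.card {i // hB.eigenvalues i < 0} := by
    rw [hB.rank_eq_card_non_zero_eigs, card_split]
  omega



/-- Adding a rank-one negative semidefinite matrix `Φ` to a symmetric matrix `M`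
with `rank (M + Φ) = rank M + 1` keeps the number of positive eigenvalues and
increases the number of negative eigenvalues by one. -/
theorem rank_one_nsd_perturbation {n : ℕ}
    (M Φ : Matrix (Fin n) (Fin n) ℝ)
    (hM : M.IsHermitian) (hΦ : (-Φ).PosSemidef) (hrkΦ : Φ.rank = 1)
    (hrk : (M + Φ).rank = M.rank + 1) :
    Nat.card {i // 0 < (hM.add (by simpa using hΦ.1.neg : Φ.IsHermitian)).eigenvalues i} =
      Nat.card {i // 0 < hM.eigenvalues i} ∧
    Nat.card {i // (hM.add (by simpa using hΦ.1.neg : Φ.IsHermitian)).eigenvalues i < 0} =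
      Nat.card {i // hM.eigenvalues i < 0} + 1 := by
  simp only [Nat.card_eq_fintype_card]
  exact aux_main M Φ hM hΦ hrkΦ hrk _
end
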